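/- Let X, Y be measurable spaces with G-invariant probability measures μ_X, μ_Y for a finite group G, and let D, D̂ : L²(μ_Y) → L²(μ_X) be bounded linear G-equivariant operators (intertwining the translation representations). Let h ∈ L²(μ_Y; Z) for a Hilbert space Z. Then for every measurable A ⊆ X with μ_X(A) > 0 and subgroup G' ≤ G, if h is fixed by the G'-action on L²(μ_Y; Z), then ‖E_x[1_A(x) ((D − D̂)h)(x)]‖_Z ≤ ‖D − D̂‖_op · ‖h‖_{L²} · sqrt(μ_X(A)) · sqrt((1 + (|G'|−1)γ_{G'}(A))/|G'|), where γ_{G'}(A) is the symmetry index of A. -/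

import Mathlib

open MeasureTheory Pointwise

theorem setwise_error_bound_equivariant_operators
    {G : Type*} [Group G] [Fintype G] [DecidableEq G]
    {X : Type*} [MeasurableSpace X] [MulAction G X]
    {Y : Type*} [MeasurableSpace Y] [MulAction G Y]
    {Z : Type*} [NormedAddCommGroup Z] [InnerProductSpace ℝ Z] [CompleteSpace Z]
    (μX : Measure X) (μY : Measure Y)
    [IsProbabilityMeasure μX] [IsProbabilityMeasure μY]
    (hsmulX : ∀ g : G, Measurable (fun a : X => g • a))
    (hsmulY : ∀ g : G, Measurable (fun b : Y => g • b))
    (hμX : ∀ g : G, μX.map (fun a : X => g • a) = μX)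
    (hμY : ∀ g : G, μY.map (fun b : Y => g • b) = μY)
    (D D' : Lp Z 2 μY →L[ℝ] Lp Z 2 μX)
    (hD : ∀ (g : G) (f f' : Lp Z 2 μY),
      (∀ᵐ b ∂μY, f' b = f (g⁻¹ • b)) →
      ∀ᵐ a ∂μX, (D f') a = (D f) (g⁻¹ • a))
    (hD' : ∀ (g : G) (f f' : Lp Z 2 μY),
      (∀ᵐ b ∂μY, f' b = f (g⁻¹ • b)) →
      ∀ᵐ a ∂μX, (D' f') a = (D' f) (g⁻¹ • a))
    (G' : Subgroup G) [Fintype G']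
    (h : Lp Z 2 μY)
    (hfix : ∀ g : G', ∀ᵐ b ∂μY, (h : Y → Z) ((g : G)⁻¹ • b) = h b)
    (A : Set X) (hA : MeasurableSet A) (hApos : 0 < (μX A).toReal) :
    ‖∫ a in A, ((D - D') h) a ∂μX‖
      ≤ ‖D - D'‖ * ‖h‖ * Real.sqrt (μX A).toReal *
        Real.sqrt
          ((1 + ((Fintype.card G' : ℝ) - 1) *
              ((1 / ((Fintype.card G' : ℝ) - 1)) *
                ∑ g ∈ Finset.univ.filter (fun g : G' => (g : G) ≠ 1),
                  (μX (A ∩ (g : G) • A)).toReal / (μX A).toReal))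
            / (Fintype.card G' : ℝ)) := by
  classical
  set n : ℕ := Fintype.card G' with hncard
  have hnpos : 0 < n := Fintype.card_pos
  have hnR : (0:ℝ) < n := by exact_mod_cast hnpos
  set u : Lp Z 2 μX := (D - D') h with hu
  set c : ℝ := ‖D - D'‖ * ‖h‖ with hc
  set a0 : ℝ := (μX A).toReal with ha0
  have hcnn : 0 ≤ c := by rw [hc]; positivity
  have mpX : ∀ g : G, MeasurePreserving (fun a : X => g • a) μX μX :=
    fun g => ⟨hsmulX g, hμX g⟩
  have embX : ∀ g : G, MeasurableEmbedding (fun a : X => g • a) := fun g =>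
    (MeasurableEquiv.mk (MulAction.toPerm g) (hsmulX g) (hsmulX g⁻¹)).measurableEmbedding
  have hmeasA : ∀ g : G, MeasurableSet (g • A) := by
    intro g
    have hset : g • A = (fun x : X => g⁻¹ • x) ⁻¹' A := by
      ext x; simp [Set.mem_smul_set_iff_inv_smul_mem]
    rw [hset]; exact hsmulX g⁻¹ hA
  have hmeasure : ∀ (g : G) (S : Set X), MeasurableSet S → μX (g • S) = μX S := by
    intro g S hS
    have h2 : g • S = (fun x : X => g⁻¹ • x) ⁻¹' S := by
      ext x; simp [Set.mem_smul_set_iff_inv_smul_mem]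
    rw [h2, ← Measure.map_apply (hsmulX g⁻¹) hS, hμX g⁻¹]
  -- invariance of u under G'
  have hinv : ∀ g : G', (fun a : X => (u : X → Z) ((g:G)⁻¹ • a)) =ᵐ[μX] (u : X → Z) := by
    intro g
    have hfg : ∀ᵐ b ∂μY, (h : Y → Z) b = (h : Y → Z) ((g:G)⁻¹ • b) :=
      (hfix g).mono fun b hb => hb.symm
    have h1 := hD (g:G) h h hfg
    have h2 := hD' (g:G) h h hfg
    have hcoe : (u : X → Z) =ᵐ[μX] fun a => (D h) a - (D' h) a := by
      have e1 : u = D h - D' h := by rw [hu]; simp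
      rw [e1]; exact Lp.coeFn_sub _ _
    have hc2 : (fun a : X => (u : X → Z) ((g:G)⁻¹ • a)) =ᵐ[μX]
        fun a => (D h) ((g:G)⁻¹ • a) - (D' h) ((g:G)⁻¹ • a) :=
      (mpX (g:G)⁻¹).quasiMeasurePreserving.ae_eq_comp hcoe
    filter_upwards [h1, h2, hcoe, hc2] with a e1 e2 e3 e4
    rw [e4, ← e1, ← e2, e3]
  -- set integral shift
  have hshift : ∀ g : G',
      ∫ a in ((g:G) • A), (u : X → Z) a ∂μX = ∫ a in A, (u : X → Z) a ∂μX := by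
    intro g
    have himg : (g:G) • A = (fun x : X => (g:G) • x) '' A := rfl
    rw [himg, (mpX (g:G)).setIntegral_image_emb (embX (g:G)) _ A]
    have hcomp : (fun x : X => (u : X → Z) ((g:G)⁻¹ • ((g:G) • x))) =ᵐ[μX]
        (fun x : X => (u : X → Z) ((g:G) • x)) :=
      (mpX (g:G)).quasiMeasurePreserving.ae_eq_comp (hinv g)
    have hfin : (fun x : X => (u : X → Z) ((g:G) • x)) =ᵐ[μX] (u : X → Z) := by
      filter_upwards [hcomp] with x hx
      rw [← hx, inv_smul_smul]
    exact setIntegral_congr_ae hA (hfin.mono fun x hx _ => hx)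
  -- averaged indicator
  set ψ : X → ℝ := fun a => ∑ g : G', ((g:G) • A).indicator (fun _ => (1:ℝ)) a with hψ
  have hψnn : ∀ a, 0 ≤ ψ a := fun a =>
    Finset.sum_nonneg fun g _ => Set.indicator_nonneg (fun _ _ => zero_le_one) a
  have huint : Integrable (u : X → Z) μX := (Lp.memLp u).integrable one_le_two
  have hkey : (n:ℝ) • (∫ a in A, (u:X→Z) a ∂μX) = ∫ a, ψ a • (u:X→Z) a ∂μX := by
    have h1 : ∀ g : G', ∫ a in A, (u:X→Z) a ∂μX
        = ∫ a, ((g:G) • A).indicator (u:X→Z) a ∂μX := by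
      intro g; rw [integral_indicator (hmeasA g)]; exact (hshift g).symm
    have h2 : ∫ a, ∑ g : G', ((g:G) • A).indicator (u:X→Z) a ∂μX
        = ∑ g : G', ∫ a, ((g:G) • A).indicator (u:X→Z) a ∂μX :=
      integral_finset_sum _ fun g _ => huint.indicator (hmeasA g)
    have h3 : ∀ a, ∑ g : G', ((g:G) • A).indicator (u:X→Z) a = ψ a • (u:X→Z) a := by
      intro a
      rw [hψ, Finset.sum_smul]
      refine Finset.sum_congr rfl fun g _ => ?_
      by_cases ha : a ∈ (g:G) • A <;>
        simp [Set.indicator_of_mem, Set.indicator_of_notMem, ha]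
    calc (n:ℝ) • (∫ a in A, (u:X→Z) a ∂μX)
        = ∑ _g : G', ∫ a in A, (u:X→Z) a ∂μX := by
          rw [Finset.sum_const, Finset.card_univ, ← hncard, Nat.cast_smul_eq_nsmul]
      _ = ∑ g : G', ∫ a, ((g:G) • A).indicator (u:X→Z) a ∂μX :=
          Finset.sum_congr rfl fun g _ => h1 g
      _ = ∫ a, ∑ g : G', ((g:G) • A).indicator (u:X→Z) a ∂μX := h2.symm
      _ = ∫ a, ψ a • (u:X→Z) a ∂μX := by simp only [h3]
  -- Lp versions
  have hψmem : MemLp ψ 2 μX := by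
    rw [hψ]
    exact memLp_finset_sum _ fun g _ => (memLp_const (1:ℝ)).indicator (hmeasA g)
  set Ψ : Lp ℝ 2 μX := hψmem.toLp ψ with hΨ
  set w : Lp ℝ 2 μX := (Lp.memLp u).norm.toLp (fun a => ‖(u:X→Z) a‖) with hwdef
  have hwnorm : ‖w‖ = ‖u‖ := by
    rw [hwdef, Lp.norm_toLp, eLpNorm_norm, ← Lp.norm_def]
  have hCS : ‖∫ a, ψ a • (u:X→Z) a ∂μX‖ ≤ ‖Ψ‖ * ‖w‖ := by
    have step1 : ‖∫ a, ψ a • (u:X→Z) a ∂μX‖ ≤ ∫ a, ψ a * ‖(u:X→Z) a‖ ∂μX := by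
      refine (norm_integral_le_integral_norm _).trans_eq ?_
      refine integral_congr_ae (Filter.Eventually.of_forall fun a => ?_)
      simp only []
      rw [norm_smul, Real.norm_eq_abs, abs_of_nonneg (hψnn a)]
    have step2 : ∫ a, ψ a * ‖(u:X→Z) a‖ ∂μX = (inner ℝ Ψ w : ℝ) := by
      rw [L2.inner_def]
      refine integral_congr_ae ?_
      filter_upwards [hψmem.coeFn_toLp, (Lp.memLp u).norm.coeFn_toLp] with a e1 e2
      simp [e1, e2, RCLike.inner_apply]
      rw [hwdef, hΨ, e1, e2, mul_comm]
    calc ‖∫ a, ψ a • (u:X→Z) a ∂μX‖ ≤ ∫ a, ψ a * ‖(u:X→Z) a‖ ∂μX := step1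
      _ = (inner ℝ Ψ w : ℝ) := step2
      _ ≤ ‖Ψ‖ * ‖w‖ := real_inner_le_norm Ψ w
  -- compute ‖Ψ‖
  set S : ℝ := ∑ g : G', (μX (A ∩ (g:G) • A)).toReal with hS
  have hSnn : 0 ≤ S := Finset.sum_nonneg fun g _ => ENNReal.toReal_nonneg
  have hΨsq : ‖Ψ‖ ^ 2 = (n:ℝ) * S := by
    rw [← real_inner_self_eq_norm_sq, L2.inner_def]
    have e0 : ∫ a, (inner ℝ ((Ψ:X→ℝ) a) ((Ψ:X→ℝ) a) : ℝ) ∂μX = ∫ a, ψ a * ψ a ∂μX := by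
      refine integral_congr_ae ?_
      filter_upwards [hψmem.coeFn_toLp] with a e1
      simp [e1, RCLike.inner_apply]
      rw [hΨ, e1, sq]
    rw [e0]
    have expand : ∀ a, ψ a * ψ a
        = ∑ g : G', ∑ g' : G',
            (((g:G) • A) ∩ ((g':G) • A)).indicator (fun _ => (1:ℝ)) a := by
      intro a
      rw [hψ, Finset.sum_mul_sum]
      refine Finset.sum_congr rfl fun g _ => Finset.sum_congr rfl fun g' _ => ?_
      by_cases h1 : a ∈ (g:G) • A <;> by_cases h2 : a ∈ (g':G) • A <;>
        simp [Set.indicator_of_mem, Set.indicator_of_notMem, h1, h2, Set.mem_inter_iff]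
    simp only [expand]
    have hout : ∫ a, ∑ g : G', ∑ g' : G',
          (((g:G) • A) ∩ ((g':G) • A)).indicator (fun _ => (1:ℝ)) a ∂μX
        = ∑ g : G', ∫ a, ∑ g' : G',
            (((g:G) • A) ∩ ((g':G) • A)).indicator (fun _ => (1:ℝ)) a ∂μX :=
      integral_finset_sum _ (fun g _ => integrable_finset_sum _ fun g' _ =>
        (integrable_const (1:ℝ)).indicator ((hmeasA g).inter (hmeasA g')))
    rw [hout]
    have hterm : ∀ g g' : G',
        ∫ a, (((g:G) • A) ∩ ((g':G) • A)).indicator (fun _ => (1:ℝ)) a ∂μX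
          = (μX (A ∩ (((g:G)⁻¹ * (g':G)) • A))).toReal := by
      intro g g'
      rw [integral_indicator_const (1:ℝ) ((hmeasA g).inter (hmeasA g')), smul_eq_mul, mul_one]
      apply congrArg ENNReal.toReal
      have hset : ((g:G) • A) ∩ ((g':G) • A)
          = (g:G) • (A ∩ (((g:G)⁻¹ * (g':G)) • A)) := by
        rw [Set.smul_set_inter, smul_smul, mul_inv_cancel_left]
      rw [hset, hmeasure (g:G) _ (hA.inter (hmeasA _))]
    have hinner : ∀ g : G',
        ∫ a, ∑ g' : G', (((g:G) • A) ∩ ((g':G) • A)).indicator (fun _ => (1:ℝ)) a ∂μX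
          = S := by
      intro g
      rw [integral_finset_sum _ (fun g' _ =>
        (integrable_const (1:ℝ)).indicator ((hmeasA _).inter (hmeasA _)))]
      rw [Finset.sum_congr rfl fun g' _ => hterm g g', hS]
      refine Fintype.sum_equiv (Equiv.mulLeft (g⁻¹ : G')) _ _ fun g' => ?_
      have hcoe : (((g⁻¹ * g' : G') : G)) = (g:G)⁻¹ * (g':G) := by
        push_cast; ring
      simp [Equiv.mulLeft, hcoe]
    rw [Finset.sum_congr rfl fun g _ => hinner g, Finset.sum_const, Finset.card_univ,
      ← hncard, nsmul_eq_mul]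
  have hΨnorm : ‖Ψ‖ = Real.sqrt ((n:ℝ) * S) := by
    rw [← hΨsq, Real.sqrt_sq (norm_nonneg _)]
  have hub : ‖u‖ ≤ c := by rw [hu, hc]; exact (D - D').le_opNorm h
  have main : ‖∫ a in A, (u:X→Z) a ∂μX‖ ≤ (n:ℝ)⁻¹ * (Real.sqrt ((n:ℝ) * S) * c) := by
    have hInt : ∫ a in A, (u:X→Z) a ∂μX = (n:ℝ)⁻¹ • ∫ a, ψ a • (u:X→Z) a ∂μX := by
      rw [← hkey, smul_smul, inv_mul_cancel₀ (ne_of_gt hnR), one_smul]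
    rw [hInt, norm_smul, Real.norm_eq_abs, abs_of_nonneg (by positivity)]
    refine mul_le_mul_of_nonneg_left ?_ (by positivity)
    calc ‖∫ a, ψ a • (u:X→Z) a ∂μX‖ ≤ ‖Ψ‖ * ‖w‖ := hCS
      _ = Real.sqrt ((n:ℝ) * S) * ‖u‖ := by rw [hΨnorm, hwnorm]
      _ ≤ Real.sqrt ((n:ℝ) * S) * c := mul_le_mul_of_nonneg_left hub (Real.sqrt_nonneg _)
  -- arithmetic
  set Sg : ℝ := ∑ g ∈ Finset.univ.filter (fun g : G' => (g : G) ≠ 1),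
      (μX (A ∩ (g : G) • A)).toReal / a0 with hSg
  have ha0ne : a0 ≠ 0 := ne_of_gt hApos
  have hT : ((n:ℝ) - 1) * ((1 / ((n:ℝ) - 1)) * Sg) = Sg := by
    rcases eq_or_ne n 1 with h1 | h1
    · haveI : Subsingleton G' := Fintype.card_le_one_iff_subsingleton.mp (le_of_eq (by rw [← hncard, h1]))
      have hempty : Finset.univ.filter (fun g : G' => (g : G) ≠ 1) = ∅ := by
        refine Finset.filter_eq_empty_iff.mpr fun g _ => ?_
        simp only [ne_eq, not_not]
        have hg1 : g = (1 : G') := Subsingleton.elim _ _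
        rw [hg1, OneMemClass.coe_one]
      have hz : Sg = 0 := by rw [hSg, hempty, Finset.sum_empty]
      rw [hz]; ring
    · have hne : (n:ℝ) - 1 ≠ 0 := by
        have : (n:ℝ) ≠ 1 := by exact_mod_cast h1
        exact sub_ne_zero.mpr this
      rw [← mul_assoc, mul_one_div, div_self hne, one_mul]
  have hsplit : 1 + Sg = S / a0 := by
    have hfilter : Finset.univ.filter (fun g : G' => ¬ ((g : G) ≠ 1)) = {(1:G')} := by
      ext g
      simp [OneMemClass.coe_eq_one]
    have hSsplit : S = a0 + ∑ g ∈ Finset.univ.filter (fun g : G' => (g : G) ≠ 1),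
        (μX (A ∩ (g:G) • A)).toReal := by
      rw [hS, ← Finset.sum_filter_add_sum_filter_not Finset.univ (fun g : G' => (g : G) ≠ 1),
        hfilter, Finset.sum_singleton, OneMemClass.coe_one, one_smul, Set.inter_self, ← ha0,
        add_comm]
    rw [hSg, ← Finset.sum_div, hSsplit]
    field_simp
  have harith : (n:ℝ)⁻¹ * Real.sqrt ((n:ℝ) * S)
      = Real.sqrt a0 * Real.sqrt ((1 + ((n:ℝ)-1) * ((1/((n:ℝ)-1)) * Sg)) / n) := by
    rw [hT, hsplit, ← Real.sqrt_mul (le_of_lt hApos)]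
    have e1 : a0 * (S / a0 / n) = S / n := by field_simp
    rw [e1]
    have e2 : (n:ℝ)⁻¹ * Real.sqrt ((n:ℝ) * S) = Real.sqrt (((n:ℝ)⁻¹)^2 * ((n:ℝ) * S)) := by
      rw [Real.sqrt_mul (sq_nonneg _), Real.sqrt_sq (by positivity)]
    rw [e2]
    congr 1
    field_simp
  refine main.trans (le_of_eq ?_)
  rw [← mul_assoc, harith]
  ring
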